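/- If h : [0,∞) → ℝ is differentiable with h(0) = h₀ < 0 and satisfies ḣ(t) ≥ γ |h(t)|^ρ whenever h(t) < 0 (with γ > 0, ρ ∈ [0,1)), then there exists T ≤ |h₀|^{1−ρ} / (γ(1−ρ)) such that h(T) ≥ 0. -/
import Mathlib


/-- Finite-time convergence: if `h` is differentiable with `h 0 = h₀ < 0` and
`ḣ(t) ≥ γ |h t|^ρ` whenever `h t < 0` (for `t ≥ 0`), with `γ > 0`, `ρ ∈ [0,1)`,
then `h` becomes nonnegative by time `|h₀|^(1-ρ)/(γ(1-ρ))`. -/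
theorem stmt_3 (γ ρ h₀ : ℝ) (hγ : 0 < γ) (hρ0 : 0 ≤ ρ) (hρ1 : ρ < 1)
    (h : ℝ → ℝ) (hdiff : Differentiable ℝ h) (h0 : h 0 = h₀) (hneg : h₀ < 0)
    (hineq : ∀ t ≥ (0 : ℝ), h t < 0 → deriv h t ≥ γ * |h t| ^ ρ) :
    ∃ T : ℝ, 0 ≤ T ∧ T ≤ |h₀| ^ (1 - ρ) / (γ * (1 - ρ)) ∧ 0 ≤ h T := by
  have h1ρ : 0 < 1 - ρ := by linarith
  have hc : 0 < γ * (1 - ρ) := by positivity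
  have habs : 0 < |h₀| ^ (1 - ρ) := by
    apply Real.rpow_pos_of_pos; rw [abs_pos]; exact ne_of_lt hneg
  set T : ℝ := |h₀| ^ (1 - ρ) / (γ * (1 - ρ)) with hTdef
  have hTpos : 0 < T := div_pos habs hc
  by_cases hex : ∃ t ∈ Set.Icc (0:ℝ) T, 0 ≤ h t
  · obtain ⟨t, ht, hht⟩ := hex
    exact ⟨t, ht.1, ht.2, hht⟩
  · exfalso
    push_neg at hex
    -- all values negative on [0, T]
    have hall : ∀ t ∈ Set.Icc (0:ℝ) T, h t < 0 := hex
    set φ : ℝ → ℝ := fun t => (-h t) ^ (1 - ρ) + γ * (1 - ρ) * t with hφ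
    have hmono : AntitoneOn φ (Set.Icc 0 T) := by
      apply antitoneOn_of_deriv_nonpos (convex_Icc 0 T)
      · apply ContinuousOn.add
        · apply ContinuousOn.rpow_const
          · exact (hdiff.continuous.neg).continuousOn
          · intro x hx
            left
            exact ne_of_gt (neg_pos.2 (hall x hx))
        · exact (continuous_const.mul continuous_id).continuousOn
      · intro x hx
        rw [interior_Icc] at hx
        have hhx : h x < 0 := hall x ⟨le_of_lt hx.1, le_of_lt hx.2⟩
        have hpos : 0 < -h x := neg_pos.2 hhx
        have hd1 : HasDerivAt (fun t => (-h t) ^ (1 - ρ))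
            ((-deriv h x) * (1 - ρ) * (-h x) ^ (1 - ρ - 1)) x := by
          have := ((hdiff x).hasDerivAt.neg).rpow_const (p := 1 - ρ) (Or.inl (ne_of_gt hpos))
          simpa using this
        have h2 : HasDerivAt (fun t : ℝ => γ * (1 - ρ) * t) (γ * (1 - ρ)) x := by
          simpa using (hasDerivAt_id x).const_mul (γ * (1 - ρ))
        exact (hd1.add h2).differentiableAt.differentiableWithinAt
      · intro x hx
        rw [interior_Icc] at hx
        have hxI : x ∈ Set.Icc (0:ℝ) T := ⟨le_of_lt hx.1, le_of_lt hx.2⟩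
        have hhx : h x < 0 := hall x hxI
        have hpos : 0 < -h x := neg_pos.2 hhx
        have hd1 : HasDerivAt (fun t => (-h t) ^ (1 - ρ))
            ((-deriv h x) * (1 - ρ) * (-h x) ^ (1 - ρ - 1)) x := by
          have := ((hdiff x).hasDerivAt.neg).rpow_const (p := 1 - ρ) (Or.inl (ne_of_gt hpos))
          simpa using this
        have hd : HasDerivAt φ
            ((-deriv h x) * (1 - ρ) * (-h x) ^ (1 - ρ - 1) + γ * (1 - ρ)) x := by
          have h2 : HasDerivAt (fun t : ℝ => γ * (1 - ρ) * t) (γ * (1 - ρ)) x := by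
            simpa using (hasDerivAt_id x).const_mul (γ * (1 - ρ))
          exact hd1.add h2
        rw [hd.deriv]
        have hge : deriv h x ≥ γ * (-h x) ^ ρ := by
          have := hineq x (le_of_lt hx.1) hhx
          rwa [abs_of_neg hhx] at this
        have hrpow_pos : 0 < (-h x) ^ (1 - ρ - 1) := Real.rpow_pos_of_pos hpos _
        have key : (-h x) ^ ρ * (-h x) ^ (1 - ρ - 1) = 1 := by
          rw [← Real.rpow_add hpos]
          norm_num
        nlinarith [mul_le_mul_of_nonneg_right (neg_le_neg hge) (le_of_lt hrpow_pos)]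
    have h0I : (0:ℝ) ∈ Set.Icc (0:ℝ) T := ⟨le_refl 0, le_of_lt hTpos⟩
    have hTI : T ∈ Set.Icc (0:ℝ) T := ⟨le_of_lt hTpos, le_refl T⟩
    have hle := hmono h0I hTI (le_of_lt hTpos)
    have hφ0 : φ 0 = |h₀| ^ (1 - ρ) := by
      simp [hφ, h0, abs_of_neg hneg]
    have hφT : φ T = (-h T) ^ (1 - ρ) + |h₀| ^ (1 - ρ) := by
      have : γ * (1 - ρ) * T = |h₀| ^ (1 - ρ) := by
        rw [hTdef]; field_simp
      simp [hφ, this]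
    have hTpos' : 0 < (-h T) ^ (1 - ρ) :=
      Real.rpow_pos_of_pos (neg_pos.2 (hall T hTI)) _
    rw [hφ0, hφT] at hle
    linarith
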